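/- For smooth sections X, Y of γ*TM along a loop γ, the L² pairing −(1/2)⟨[D_Z, 1+Δ]X, Y⟩₀, viewed as a linear functional in Z, is represented in the H¹ inner product by A_X Y = (1/2)(1+Δ)^{−1}( R(X, ∇_{γ̇}Y)γ̇ − R(∇_{γ̇}X, Y)γ̇ ); i.e., −(1/2)⟨[D_Z,1+Δ]X,Y⟩₀ = ⟨A_X Y, Z⟩₁ for all smooth Z. -/
import Mathlib


/-- Abstract sections-along-a-loop setting: `inner0` is the L²
pairing along the loop `γ`, `grad = ∇_{γ̇}` (skew-adjoint), `Δ = −grad²`, so that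
`1 + Δ = 1 − grad²` with inverse `Sinv = (1+Δ)^{−1}`; the H¹ pairing is
`⟨A,B⟩₁ = ⟨(1+Δ)A, B⟩₀`; the curvature `R` has its standard symmetries; and
`[D_Z, 1+Δ]X = −∇_{γ̇}(R(Z,γ̇)X) − R(Z,γ̇)(∇_{γ̇}X)`.  Then
`A_X Y := (1/2)(1+Δ)^{−1}( R(X,∇_{γ̇}Y)γ̇ − R(∇_{γ̇}X,Y)γ̇ )` represents the
functional `Z ↦ −(1/2)⟨[D_Z, 1+Δ]X, Y⟩₀` in the H¹ inner product. -/
theorem statement_5 {V : Type*} [AddCommGroup V] [Module ℝ V]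
    (inner0 : V →ₗ[ℝ] V →ₗ[ℝ] ℝ)
    (grad Sinv : Module.End ℝ V)
    (R : V →ₗ[ℝ] V →ₗ[ℝ] V →ₗ[ℝ] V)
    (gdot : V)
    (hsym : ∀ a b : V, inner0 a b = inner0 b a)
    (hskew : ∀ a b : V, inner0 (grad a) b + inner0 a (grad b) = 0)
    (hcurvpair : ∀ a b c d : V, inner0 (R a b c) d = inner0 (R c d a) b)
    (hcurvskew : ∀ a b c d : V, inner0 (R a b c) d = - inner0 c (R a b d))
    (hSinv₁ : (1 - grad * grad) * Sinv = 1)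
    (hSinv₂ : Sinv * (1 - grad * grad) = 1)
    (X Y : V) :
    ∀ Z : V,
      -(1 / 2 : ℝ) * inner0 (-(grad (R Z gdot X)) - R Z gdot (grad X)) Y
        = inner0
            ((1 - grad * grad)
              ((1 / 2 : ℝ) • Sinv (R X (grad Y) gdot - R (grad X) Y gdot)))
            Z := by
  intro Z
  have hS : (1 - grad * grad) ((1/2 : ℝ) • Sinv (R X (grad Y) gdot - R (grad X) Y gdot))
      = (1/2 : ℝ) • (R X (grad Y) gdot - R (grad X) Y gdot) := by
    have h := LinearMap.congr_fun hSinv₁ (R X (grad Y) gdot - R (grad X) Y gdot)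
    simp only [Module.End.mul_apply, Module.End.one_apply] at h
    rw [map_smul, h]
  rw [hS]
  have h1 : inner0 (grad (R Z gdot X)) Y = - inner0 (R Z gdot X) (grad Y) := by
    have := hskew (R Z gdot X) Y; linarith
  have h2 : inner0 (R Z gdot X) (grad Y) = - inner0 (R X (grad Y) gdot) Z := by
    rw [hcurvpair, hcurvskew, hsym]
  have h3 : inner0 (R Z gdot (grad X)) Y = - inner0 (R (grad X) Y gdot) Z := by
    rw [hcurvpair, hcurvskew, hsym]
  simp only [map_sub, map_neg, map_smul, LinearMap.sub_apply, LinearMap.neg_apply,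
    LinearMap.smul_apply, smul_eq_mul]
  linarith
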